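/- Let β > 1, 0 < θ < β/(β-1), 0 < ξ < (β/θ)^{1/(1-β+β/θ)}, f(x) = sgn(x)|x|^β, and g(t) = (ξ^{-β/θ} + t)^{-θ}·(1 - (θ/β)(ξ^{-β/θ} + t)^{-θ/β - 1 + θ}) for t ≥ 0, which is positive for all t ≥ 0. Then the unique continuous solution of x'(t) = -f(x(t)) + g(t), t > 0, x(0) = ξ, is x(t) = (ξ^{-β/θ} + t)^{-θ/β}; moreover g ∈ RV_∞(-θ), lim_{t→∞} g(t)/(f∘F⁻¹)(t) = +∞, x(t) → 0 as t → ∞, and lim_{t→∞} f(x(t))/g(t) = 1. -/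

import Mathlib

open Filter Real Set Topology MeasureTheory

noncomputable section

/-- A function `f : (0,∞) → (0,∞)` is regularly varying at `0` with index `β` if
`f(λx)/f(x) → λ^β` as `x → 0⁺` for every `λ > 0`. -/
def RVat0 (f : ℝ → ℝ) (β : ℝ) : Prop :=
  ∀ lam : ℝ, 0 < lam →
    Tendsto (fun x => f (lam * x) / f x) (nhdsWithin 0 (Set.Ioi 0)) (nhds (lam ^ β))

/-- A function `h : (0,∞) → (0,∞)` is regularly varying at `∞` with index `α` if
`h(λt)/h(t) → λ^α` as `t → ∞` for every `λ > 0`. -/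
def RVatInf (h : ℝ → ℝ) (α : ℝ) : Prop :=
  ∀ lam : ℝ, 0 < lam →
    Tendsto (fun t => h (lam * t) / h t) atTop (nhds (lam ^ α))

/-- A continuous solution of the perturbed ODE `x'(t) = -f(x(t)) + g(t)`, `t > 0`,
with initial condition `x(0) = ξ`. -/
def IsSol (f g : ℝ → ℝ) (ξ : ℝ) (x : ℝ → ℝ) : Prop :=
  ContinuousOn x (Set.Ici 0) ∧ x 0 = ξ ∧
    ∀ t : ℝ, 0 < t → HasDerivAt x (-f (x t) + g t) t

lemma hasDerivAt_sgnpow {β : ℝ} (hβ : 1 < β) (u : ℝ) :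
    HasDerivAt (fun v : ℝ => Real.sign v * |v| ^ β) (β * |u| ^ (β - 1)) u := by
  rcases lt_trichotomy u 0 with hu | hu | hu
  · have h1 : HasDerivAt (fun v : ℝ => -((-v) ^ β)) (β * (-u) ^ (β - 1)) u := by
      have := (HasDerivAt.rpow_const (f := fun v : ℝ => -v) (f' := -1) (x := u) (p := β)
        (hasDerivAt_neg u) (Or.inl (by simpa using hu.ne))).neg
      refine this.congr_deriv ?_
      ring
    have h2 : (fun v : ℝ => Real.sign v * |v| ^ β) =ᶠ[nhds u] fun v => -((-v) ^ β) := by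
      filter_upwards [Iio_mem_nhds hu] with v hv
      rw [Real.sign_of_neg hv, abs_of_neg hv]
      ring
    have := h1.congr_of_eventuallyEq h2
    rwa [abs_of_neg hu]
  · subst hu
    have key : Tendsto (fun v : ℝ => |v| ^ (β - 1)) (nhds 0) (nhds 0) := by
      have hc : ContinuousAt (fun z : ℝ => z ^ (β - 1)) 0 :=
        Real.continuousAt_rpow_const 0 (β - 1) (Or.inr (by linarith))
      have habs : Tendsto (fun v : ℝ => |v|) (nhds 0) (nhds 0) := by
        simpa using continuous_abs.tendsto (0:ℝ)
      have := hc.tendsto.comp habs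
      simpa [Function.comp_def, Real.zero_rpow (show β - 1 ≠ 0 by linarith)] using this
    have : HasDerivAt (fun v : ℝ => Real.sign v * |v| ^ β) 0 0 := by
      rw [hasDerivAt_iff_tendsto_slope]
      have heq : ∀ v : ℝ, v ≠ 0 →
          slope (fun v : ℝ => Real.sign v * |v| ^ β) 0 v = |v| ^ (β - 1) := by
        intro v hv
        have hav : (0:ℝ) < |v| := abs_pos.2 hv
        have hs : Real.sign v * |v| = v := by
          rcases lt_or_gt_of_ne hv with h | h
          · rw [Real.sign_of_neg h, abs_of_neg h]; ring
          · rw [Real.sign_of_pos h, abs_of_pos h]; ring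
        rw [slope_def_field]
        simp only [Real.sign_zero, zero_mul, sub_zero]
        rw [div_eq_iff hv]
        calc Real.sign v * |v| ^ β = Real.sign v * (|v| ^ (β - 1) * |v|) := by
              rw [← Real.rpow_add_one hav.ne' (β-1)]; ring_nf
          _ = |v| ^ (β - 1) * (Real.sign v * |v|) := by ring
          _ = |v| ^ (β - 1) * v := by rw [hs]
      have : Tendsto (fun v : ℝ => |v| ^ (β - 1)) (nhdsWithin 0 {(0:ℝ)}ᶜ) (nhds 0) :=
        key.mono_left nhdsWithin_le_nhds
      refine this.congr' ?_
      filter_upwards [self_mem_nhdsWithin] with v hv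
      exact (heq v hv).symm
    simpa [abs_zero, Real.zero_rpow (show β - 1 ≠ 0 by linarith)] using this
  · have h1 : HasDerivAt (fun v : ℝ => v ^ β) (β * u ^ (β - 1)) u :=
      Real.hasDerivAt_rpow_const (Or.inl hu.ne')
    have h2 : (fun v : ℝ => Real.sign v * |v| ^ β) =ᶠ[nhds u] fun v => v ^ β := by
      filter_upwards [Ioi_mem_nhds hu] with v hv
      rw [Real.sign_of_pos hv, abs_of_pos hv, one_mul]
    have := h1.congr_of_eventuallyEq h2
    rwa [abs_of_pos hu]

lemma lipschitz_sgnpow {β : ℝ} (hβ : 1 < β) (M : ℝ) (hM : 0 ≤ M) :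
    LipschitzOnWith (β * M ^ (β - 1)).toNNReal (fun v : ℝ => Real.sign v * |v| ^ β)
      (Set.Icc (-M) M) := by
  apply (convex_Icc (-M) M).lipschitzOnWith_of_nnnorm_hasDerivWithin_le
    (f' := fun u => β * |u| ^ (β - 1))
    (fun u _ => (hasDerivAt_sgnpow hβ u).hasDerivWithinAt)
  intro u hu
  have h1 : (0:ℝ) ≤ β * |u| ^ (β - 1) := by positivity
  have h2 : β * |u| ^ (β - 1) ≤ β * M ^ (β - 1) := by
    have : |u| ≤ M := abs_le.2 ⟨hu.1, hu.2⟩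
    have := Real.rpow_le_rpow (abs_nonneg u) this (by linarith : (0:ℝ) ≤ β - 1)
    nlinarith
  rw [← NNReal.coe_le_coe, coe_nnnorm, Real.norm_eq_abs, abs_of_nonneg h1,
    Real.coe_toNNReal _ (le_trans h1 h2)]
  exact h2

lemma sol_unique {β : ℝ} (hβ : 1 < β) {f g x y : ℝ → ℝ} {ξ : ℝ}
    (hf : ∀ u, f u = Real.sign u * |u| ^ β)
    (hxc : ContinuousOn x (Set.Ici 0)) (hx0 : x 0 = ξ)
    (hxd : ∀ t, 0 < t → HasDerivAt x (-f (x t) + g t) t)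
    (hyc : ContinuousOn y (Set.Ici 0)) (hy0 : y 0 = ξ)
    (hyd : ∀ t, 0 < t → HasDerivAt y (-f (y t) + g t) t) :
    ∀ t, 0 ≤ t → y t = x t := by
  intro t ht
  rcases ht.eq_or_lt with h | h
  · rw [← h, hy0, hx0]
  obtain ⟨Mx, hMx⟩ := (isCompact_Icc (a := (0:ℝ)) (b := t)).exists_bound_of_continuousOn
    (hxc.mono Icc_subset_Ici_self)
  obtain ⟨My, hMy⟩ := (isCompact_Icc (a := (0:ℝ)) (b := t)).exists_bound_of_continuousOn
    (hyc.mono Icc_subset_Ici_self)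
  set M : ℝ := max 0 (max Mx My) with hMdef
  have hM0 : 0 ≤ M := le_max_left _ _
  set K : NNReal := (β * M ^ (β - 1)).toNNReal with hKdef
  have hfl : LipschitzOnWith K f (Set.Icc (-M) M) := by
    have hfe : f = fun v : ℝ => Real.sign v * |v| ^ β := funext hf
    rw [hfe]
    exact lipschitz_sgnpow hβ M hM0
  have hv : ∀ τ : ℝ, LipschitzOnWith K (fun u => -f u + g τ) (Set.Icc (-M) M) := by
    intro τ a ha b hb
    calc edist (-f a + g τ) (-f b + g τ) = edist (f a) (f b) := by
          rw [edist_dist, edist_dist, dist_add_right, dist_neg_neg]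
      _ ≤ K * edist a b := hfl ha hb
  have hxmem : ∀ τ ∈ Set.Icc (0:ℝ) t, x τ ∈ Set.Icc (-M) M := by
    intro τ hτ
    have := (hMx τ hτ).trans ((le_max_left Mx My).trans (le_max_right 0 _))
    rw [Real.norm_eq_abs] at this
    exact ⟨(abs_le.1 this).1, (abs_le.1 this).2⟩
  have hymem : ∀ τ ∈ Set.Icc (0:ℝ) t, y τ ∈ Set.Icc (-M) M := by
    intro τ hτ
    have := (hMy τ hτ).trans ((le_max_right Mx My).trans (le_max_right 0 _))
    rw [Real.norm_eq_abs] at this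
    exact ⟨(abs_le.1 this).1, (abs_le.1 this).2⟩
  have key : ∀ ε ∈ Set.Ioo (0:ℝ) t,
      dist (y t) (x t) ≤ dist (y ε) (x ε) * Real.exp (↑K * (t - ε)) := by
    intro ε hε
    have hsub : Set.Icc ε t ⊆ Set.Ici (0:ℝ) := fun τ hτ => le_trans hε.1.le hτ.1
    refine dist_le_of_trajectories_ODE_of_mem (v := fun τ u => -f u + g τ)
      (s := fun _ => Set.Icc (-M) M) (K := K) (fun τ _ => hv τ)
      (hyc.mono hsub)
      (fun τ hτ => (hyd τ (lt_of_lt_of_le hε.1 hτ.1)).hasDerivWithinAt)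
      (fun τ hτ => hymem τ ⟨le_trans hε.1.le hτ.1, hτ.2.le⟩)
      (hxc.mono hsub)
      (fun τ hτ => (hxd τ (lt_of_lt_of_le hε.1 hτ.1)).hasDerivWithinAt)
      (fun τ hτ => hxmem τ ⟨le_trans hε.1.le hτ.1, hτ.2.le⟩)
      le_rfl t ⟨hε.2.le, le_rfl⟩
  have hlim : Tendsto (fun ε => dist (y ε) (x ε) * Real.exp (↑K * (t - ε)))
      (nhdsWithin 0 (Set.Ioi 0)) (nhds 0) := by
    have hy' : Tendsto y (nhdsWithin 0 (Set.Ioi 0)) (nhds ξ) := by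
      have := (hyc 0 Set.self_mem_Ici).mono_left
        (nhdsWithin_mono (0:ℝ) Set.Ioi_subset_Ici_self)
      rwa [hy0] at this
    have hx' : Tendsto x (nhdsWithin 0 (Set.Ioi 0)) (nhds ξ) := by
      have := (hxc 0 Set.self_mem_Ici).mono_left
        (nhdsWithin_mono (0:ℝ) Set.Ioi_subset_Ici_self)
      rwa [hx0] at this
    have h1 : Tendsto (fun ε => dist (y ε) (x ε)) (nhdsWithin 0 (Set.Ioi 0)) (nhds 0) := by
      simpa using hy'.dist hx'
    have h2 : Tendsto (fun ε : ℝ => Real.exp (↑K * (t - ε))) (nhdsWithin 0 (Set.Ioi 0))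
        (nhds (Real.exp (↑K * t))) := by
      have hc : Continuous (fun ε : ℝ => Real.exp (↑K * (t - ε))) :=
        Real.continuous_exp.comp (continuous_const.mul (continuous_const.sub continuous_id))
      have := (hc.tendsto 0).mono_left (nhdsWithin_le_nhds (s := Set.Ioi (0:ℝ)))
      simpa using this
    simpa using h1.mul h2
  have hfinal : dist (y t) (x t) ≤ 0 := by
    refine ge_of_tendsto hlim ?_
    filter_upwards [Ioo_mem_nhdsGT_of_mem (Set.left_mem_Ico.2 h)] with ε hε
    exact key ε hε
  exact dist_le_zero.1 hfinal

/-- Example 3.5: with `β > 1`, `0 < θ < β/(β-1)`, `0 < ξ < (β/θ)^{1/(1-β+β/θ)}`,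
`f(x) = sgn(x)|x|^β` and the given positive perturbation `g`, the unique continuous
solution of `x' = -f(x) + g`, `x(0) = ξ`, is `x(t) = (ξ^{-β/θ}+t)^{-θ/β}`; moreover
`g ∈ RV_∞(-θ)`, `g(t)/(f∘F⁻¹)(t) → +∞`, `x(t) → 0` and `f(x(t))/g(t) → 1`. -/
theorem stmt_18 (β θ ξ : ℝ) (hβ : 1 < β) (hθ : θ ∈ Set.Ioo (0:ℝ) (β / (β - 1)))
    (hξ : ξ ∈ Set.Ioo (0:ℝ) ((β / θ) ^ ((1:ℝ) / (1 - β + β / θ))))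
    (f g F Finv x : ℝ → ℝ)
    (hf : ∀ y : ℝ, f y = Real.sign y * |y| ^ β)
    (hg : ∀ t : ℝ, 0 ≤ t → g t =
      (ξ ^ (-(β / θ)) + t) ^ (-θ) *
        (1 - (θ / β) * (ξ ^ (-(β / θ)) + t) ^ (-(θ / β) - 1 + θ)))
    (hxdef : ∀ t : ℝ, 0 ≤ t → x t = (ξ ^ (-(β / θ)) + t) ^ (-(θ / β)))
    (hF : ∀ y : ℝ, 0 < y → F y = ∫ u in y..(1:ℝ), 1 / f u)
    (hFinv : ∀ t : ℝ, 0 ≤ t → 0 < Finv t ∧ F (Finv t) = t) :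
    (∀ t : ℝ, 0 ≤ t → 0 < g t) ∧
    IsSol f g ξ x ∧
    (∀ y : ℝ → ℝ, IsSol f g ξ y → ∀ t : ℝ, 0 ≤ t → y t = x t) ∧
    RVatInf g (-θ) ∧
    Tendsto (fun t => g t / f (Finv t)) atTop atTop ∧
    Tendsto x atTop (nhds 0) ∧
    Tendsto (fun t => f (x t) / g t) atTop (nhds 1) := by
  obtain ⟨hθ0, hθβ⟩ := hθ
  obtain ⟨hξ0, hξub⟩ := hξ
  have hβ0 : (0:ℝ) < β := by linarith
  have hβ1 : (0:ℝ) < β - 1 := by linarith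
  have hθβ' : θ * (β - 1) < β := (lt_div_iff₀ hβ1).1 hθβ
  set c : ℝ := ξ ^ (-(β / θ)) with hcdef
  have hc : 0 < c := Real.rpow_pos_of_pos hξ0 _
  have hct : ∀ t : ℝ, 0 ≤ t → 0 < c + t := fun t ht => by linarith
  set e : ℝ := -(θ / β) - 1 + θ with hedef
  have he : e < 0 := by
    have h1 : θ / β < θ := by
      rw [div_lt_iff₀ hβ0]; nlinarith
    have h2 : θ - θ / β = θ * (β - 1) / β := by field_simp
    have : θ - θ / β < 1 := by
      rw [h2, div_lt_one hβ0]; linarith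
    simp only [hedef]; linarith
  set p : ℝ := 1 - β + β / θ with hpdef
  have hp : 0 < p := by
    have : β - 1 < β / θ := by
      rw [lt_div_iff₀ hθ0]; nlinarith
    simp only [hpdef]; linarith
  -- the key smallness bound
  have hSlt : ∀ t : ℝ, 0 ≤ t → (θ / β) * (c + t) ^ e < 1 := by
    intro t ht
    have h1 : (c + t) ^ e ≤ c ^ e :=
      Real.rpow_le_rpow_of_nonpos hc (by linarith) he.le
    have h2 : c ^ e = ξ ^ p := by
      rw [hcdef, ← Real.rpow_mul hξ0.le]
      congr 1
      simp only [hedef, hpdef]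
      field_simp
      ring
    have h3 : ξ ^ p < β / θ := by
      have h4 := Real.rpow_lt_rpow hξ0.le hξub hp
      rwa [← Real.rpow_mul (div_pos hβ0 hθ0).le, one_div_mul_cancel hp.ne',
        Real.rpow_one] at h4
    have h5 : (c + t) ^ e < β / θ := lt_of_le_of_lt h1 (h2 ▸ h3)
    have h6 : (θ / β) * ((c + t) ^ e) < (θ / β) * (β / θ) :=
      mul_lt_mul_of_pos_left h5 (div_pos hθ0 hβ0)
    have h7 : (θ / β) * (β / θ) = 1 := by field_simp
    linarith
  have hgpos : ∀ t : ℝ, 0 ≤ t → 0 < g t := by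
    intro t ht
    rw [hg t ht]
    have h1 : (0:ℝ) < (c + t) ^ (-θ) := Real.rpow_pos_of_pos (hct t ht) _
    have h2 : (0:ℝ) < 1 - (θ / β) * (c + t) ^ e := by
      have := hSlt t ht; linarith
    exact mul_pos h1 h2
  have hxpos : ∀ t : ℝ, 0 ≤ t → 0 < x t := by
    intro t ht
    rw [hxdef t ht]
    exact Real.rpow_pos_of_pos (hct t ht) _
  have hfx : ∀ t : ℝ, 0 ≤ t → f (x t) = (c + t) ^ (-θ) := by
    intro t ht
    have hx0 := hxpos t ht
    rw [hf, Real.sign_of_pos hx0, abs_of_pos hx0, one_mul, hxdef t ht,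
      ← Real.rpow_mul (hct t ht).le]
    congr 1
    field_simp
  have hsol : IsSol f g ξ x := by
    refine ⟨?_, ?_, ?_⟩
    · refine ContinuousOn.congr ?_ (fun t ht => hxdef t (mem_Ici.1 ht))
      exact ((continuous_const.add continuous_id).continuousOn).rpow_const
        (fun t ht => Or.inl (hct t (mem_Ici.1 ht)).ne')
    · rw [hxdef 0 le_rfl, add_zero, hcdef, ← Real.rpow_mul hξ0.le]
      have : -(β / θ) * -(θ / β) = 1 := by field_simp
      rw [this, Real.rpow_one]
    · intro t ht0
      have hd : HasDerivAt (fun τ => (c + τ) ^ (-(θ / β)))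
          (1 * (-(θ / β)) * (c + t) ^ (-(θ / β) - 1)) t :=
        HasDerivAt.rpow_const ((hasDerivAt_id t).const_add c)
          (Or.inl (hct t ht0.le).ne')
      have heq : x =ᶠ[nhds t] fun τ => (c + τ) ^ (-(θ / β)) := by
        filter_upwards [Ioi_mem_nhds ht0] with τ hτ
        exact hxdef τ (le_of_lt hτ)
      have hd2 := hd.congr_of_eventuallyEq heq
      refine hd2.congr_deriv ?_; symm
      rw [hfx t ht0.le, hg t ht0.le]
      have hmul : (c + t) ^ (-θ) * (c + t) ^ e = (c + t) ^ (-(θ / β) - 1) := by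
        rw [← Real.rpow_add (hct t ht0.le)]
        congr 1
        simp only [hedef]; ring
      simp only [hedef] at hmul ⊢
      linear_combination (-(θ / β)) * hmul
  have huniq : ∀ y : ℝ → ℝ, IsSol f g ξ y → ∀ t : ℝ, 0 ≤ t → y t = x t := by
    intro y hy
    exact sol_unique hβ hf hsol.1 hsol.2.1 hsol.2.2 hy.1 hy.2.1 hy.2.2
  have htop : Tendsto (fun t : ℝ => c + t) atTop atTop :=
    tendsto_atTop_add_const_left atTop c tendsto_id
  have hS : Tendsto (fun t : ℝ => (c + t) ^ e) atTop (nhds 0) := by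
    have := (tendsto_rpow_neg_atTop (by linarith : (0:ℝ) < -e)).comp htop
    simpa [Function.comp_def] using this
  have hSmul : Tendsto (fun t : ℝ => 1 - (θ / β) * (c + t) ^ e) atTop (nhds 1) := by
    have := (hS.const_mul (θ / β)).const_sub 1
    simpa using this
  have hx0lim : Tendsto x atTop (nhds 0) := by
    have h1 : Tendsto (fun t : ℝ => (c + t) ^ (-(θ / β))) atTop (nhds 0) := by
      have := (tendsto_rpow_neg_atTop (div_pos hθ0 hβ0)).comp htop
      simpa [Function.comp_def] using this
    refine h1.congr' ?_
    filter_upwards [eventually_ge_atTop 0] with t ht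
    exact (hxdef t ht).symm
  have hratio : Tendsto (fun t => f (x t) / g t) atTop (nhds 1) := by
    have h1 : Tendsto (fun t : ℝ => (1 - (θ / β) * (c + t) ^ e)⁻¹) atTop (nhds 1) := by
      have := hSmul.inv₀ (by norm_num)
      simpa using this
    refine h1.congr' ?_
    filter_upwards [eventually_ge_atTop 0] with t ht
    rw [hfx t ht, hg t ht,
      div_mul_cancel_left₀ (Real.rpow_pos_of_pos (hct t ht) (-θ)).ne']
  have hRV : RVatInf g (-θ) := by
    intro lam hlam
    have hlamtop : Tendsto (fun t : ℝ => lam * t) atTop atTop :=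
      Tendsto.const_mul_atTop hlam tendsto_id
    have hR : Tendsto (fun t : ℝ => (c + lam * t) / (c + t)) atTop (nhds lam) := by
      have h1 : Tendsto (fun t : ℝ => (c / t + lam) / (c / t + 1)) atTop (nhds lam) := by
        have hct0 : Tendsto (fun t : ℝ => c / t) atTop (nhds 0) := by
          simpa [div_eq_mul_inv] using tendsto_inv_atTop_zero.const_mul c
        have hnum : Tendsto (fun t : ℝ => c / t + lam) atTop (nhds lam) := by
          simpa using hct0.add_const lam
        have hden : Tendsto (fun t : ℝ => c / t + 1) atTop (nhds 1) := by
          simpa using hct0.add_const 1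
        simpa [Pi.div_def] using hnum.div hden (by norm_num)
      refine h1.congr' ?_
      filter_upwards [eventually_gt_atTop 0] with t ht
      have hct' : c + t ≠ 0 := (hct t ht.le).ne'
      field_simp
    have hfac1 : Tendsto (fun t : ℝ => ((c + lam * t) / (c + t)) ^ (-θ)) atTop
        (nhds (lam ^ (-θ))) :=
      ((Real.continuousAt_rpow_const lam (-θ) (Or.inl hlam.ne')).tendsto).comp hR
    have hSlam : Tendsto (fun t : ℝ => 1 - (θ / β) * (c + lam * t) ^ e) atTop (nhds 1) :=
      hSmul.comp hlamtop
    have hfac2 : Tendsto (fun t : ℝ =>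
        (1 - (θ / β) * (c + lam * t) ^ e) / (1 - (θ / β) * (c + t) ^ e)) atTop (nhds 1) := by
      have := hSlam.div hSmul (by norm_num)
      simpa [Pi.div_def] using this
    have hprod := hfac1.mul hfac2
    rw [mul_one] at hprod
    refine hprod.congr' ?_
    filter_upwards [eventually_gt_atTop 0] with t ht
    have hlt : 0 ≤ lam * t := by positivity
    rw [hg t ht.le, hg (lam * t) hlt, mul_div_mul_comm,
      Real.div_rpow (hct (lam * t) hlt).le (hct t ht.le).le]
  -- the formula for F and Finv
  have hFy : ∀ y : ℝ, 0 < y → F y = (y ^ (1 - β) - 1) / (β - 1) := by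
    intro y hy
    rw [hF y hy]
    have hcong : Set.EqOn (fun u : ℝ => 1 / f u) (fun u : ℝ => u ^ (-β)) (Set.uIcc y 1) := by
      intro u hu
      have hmin : (0:ℝ) < min y 1 := lt_min hy one_pos
      have hu0 : 0 < u := lt_of_lt_of_le hmin hu.1
      simp only
      rw [hf, Real.sign_of_pos hu0, abs_of_pos hu0, one_mul, one_div,
        ← Real.rpow_neg hu0.le]
    rw [intervalIntegral.integral_congr hcong,
      integral_rpow (Or.inr ⟨(by linarith : -β < -1).ne, Set.notMem_uIcc_of_lt hy one_pos⟩),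
      Real.one_rpow]
    have hne1 : (1:ℝ) - β ≠ 0 := by linarith
    have hne2 : β - 1 ≠ 0 := hβ1.ne'
    rw [show -β + 1 = 1 - β by ring]
    field_simp
    ring
  have hFinvpow : ∀ t : ℝ, 0 ≤ t → (Finv t) ^ (1 - β) = 1 + (β - 1) * t := by
    intro t ht
    obtain ⟨hpos, hFt⟩ := hFinv t ht
    rw [hFy _ hpos] at hFt
    have hne2 : β - 1 ≠ 0 := hβ1.ne'
    field_simp at hFt
    linarith
  set q : ℝ := β / (β - 1) with hqdef
  have hq : 0 < q := div_pos hβ0 hβ1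
  have hθq : θ < q := hθβ
  have hfFinv : ∀ t : ℝ, 0 ≤ t → f (Finv t) = (1 + (β - 1) * t) ^ (-q) := by
    intro t ht
    obtain ⟨hpos, -⟩ := hFinv t ht
    rw [hf, Real.sign_of_pos hpos, abs_of_pos hpos, one_mul]
    have h1 : Finv t ^ β = (Finv t ^ (1 - β)) ^ (β / (1 - β)) := by
      rw [← Real.rpow_mul hpos.le]
      congr 1
      rw [mul_comm, div_mul_cancel₀ _ (show (1:ℝ) - β ≠ 0 by linarith)]
    rw [h1, hFinvpow t ht]
    congr 1
    rw [hqdef, show (1:ℝ) - β = -(β - 1) by ring, div_neg]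
  set d : ℝ := θ / q with hddef
  have hd0 : 0 < d := div_pos hθ0 hq
  have hd1 : d < 1 := (div_lt_one hq).2 hθq
  have hdq : d * q = θ := div_mul_cancel₀ θ hq.ne'
  have hB : Tendsto (fun t : ℝ => (1 + (β - 1) * t) * (c + t) ^ (-d)) atTop atTop := by
    have hgrow : Tendsto (fun t : ℝ => ((β - 1) / 2) * (c + t) ^ (1 - d)) atTop atTop := by
      apply Tendsto.const_mul_atTop (by linarith : (0:ℝ) < (β - 1) / 2)
      have := (tendsto_rpow_atTop (by linarith : (0:ℝ) < 1 - d)).comp htop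
      simpa [Function.comp_def] using this
    refine tendsto_atTop_mono' atTop ?_ hgrow
    filter_upwards [eventually_ge_atTop c, eventually_ge_atTop 0] with t htc ht0
    have hpos := hct t ht0
    have h1 : ((β - 1) / 2) * (c + t) ≤ 1 + (β - 1) * t := by nlinarith
    have h2 : (c + t) ^ ((1:ℝ) - d) = (c + t) * (c + t) ^ (-d) := by
      rw [show (1:ℝ) - d = 1 + -d by ring, Real.rpow_add hpos, Real.rpow_one]
    calc ((β - 1) / 2) * (c + t) ^ ((1:ℝ) - d)
        = (((β - 1) / 2) * (c + t)) * (c + t) ^ (-d) := by rw [h2]; ring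
      _ ≤ (1 + (β - 1) * t) * (c + t) ^ (-d) :=
          mul_le_mul_of_nonneg_right h1 (Real.rpow_nonneg hpos.le _)
  have hQ : Tendsto (fun t : ℝ => ((1 + (β - 1) * t) * (c + t) ^ (-d)) ^ q) atTop atTop :=
    (tendsto_rpow_atTop hq).comp hB
  have hfinal : Tendsto (fun t => g t / f (Finv t)) atTop atTop := by
    have hprod := Filter.Tendsto.atTop_mul_pos (by norm_num : (0:ℝ) < 1) hQ hSmul
    refine hprod.congr' ?_
    filter_upwards [eventually_ge_atTop 0] with t ht
    have hP : (0:ℝ) < 1 + (β - 1) * t := by nlinarith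
    have hc' := hct t ht
    rw [hg t ht, hfFinv t ht,
      Real.mul_rpow hP.le (Real.rpow_nonneg hc'.le _)]
    have h3 : ((c + t) ^ (-d)) ^ q = (c + t) ^ (-θ) := by
      rw [← Real.rpow_mul hc'.le]
      congr 1
      rw [neg_mul, hdq]
    have h4 : (1 + (β - 1) * t) ^ (-q) = ((1 + (β - 1) * t) ^ q)⁻¹ :=
      Real.rpow_neg hP.le q
    rw [h3, h4, div_eq_mul_inv (((c + t) ^ (-θ) * (1 - θ / β * (c + t) ^ e))) (((1 + (β - 1) * t) ^ q)⁻¹), inv_inv]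
    ring
  exact ⟨hgpos, hsol, huniq, hRV, hfinal, hx0lim, hratio⟩
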